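/- The pressure function at t = 1 equals log 2: p(1) = lim_{n→∞} (1/n) log ∑_{ω ∈ {0,1}^n} sup_{x ∈ ⟨ω⟩} exp(ψ_n(x)) = log 2. -/

import Mathlib

open Real Finset

noncomputable def psi (x : ℝ) : ℝ := Real.log (1 - Real.cos (2 * Real.pi * x))

noncomputable def psiSum (n : ℕ) (x : ℝ) : ℝ :=
  ∑ ℓ ∈ Finset.range n, psi (Int.fract ((2:ℝ) ^ ℓ * x))

noncomputable def aa (ℓ : ℕ) (y : ℝ) : ℝ := 1 - Real.cos (2 * Real.pi * ((2:ℝ) ^ ℓ * y))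

lemma aa_nonneg (ℓ : ℕ) (y : ℝ) : 0 ≤ aa ℓ y := by
  have := Real.cos_le_one (2 * Real.pi * ((2:ℝ) ^ ℓ * y)); unfold aa; linarith

lemma aa_le_two (ℓ : ℕ) (y : ℝ) : aa ℓ y ≤ 2 := by
  have := Real.neg_one_le_cos (2 * Real.pi * ((2:ℝ) ^ ℓ * y)); unfold aa; linarith

lemma aa_eq_zero_iff (ℓ : ℕ) (y : ℝ) : aa ℓ y = 0 ↔ ∃ q : ℤ, (2:ℝ) ^ ℓ * y = q := by
  unfold aa
  rw [sub_eq_zero, eq_comm, Real.cos_eq_one_iff]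
  constructor
  · rintro ⟨q, hq⟩
    refine ⟨q, ?_⟩
    have hπ := Real.pi_pos
    have h : (q : ℝ) * (2 * π) = (2 ^ ℓ * y) * (2 * π) := by linarith [hq]
    have h2 : (0:ℝ) < 2 * π := by positivity
    exact (mul_right_cancel₀ (ne_of_gt h2) h).symm
  · rintro ⟨q, hq⟩
    exact ⟨q, by rw [hq]; ring⟩

lemma exp_psi_fract (u : ℝ) :
    Real.exp (psi (Int.fract u)) =
      if 1 - Real.cos (2 * Real.pi * u) = 0 then 1 else 1 - Real.cos (2 * Real.pi * u) := by
  have hcos : Real.cos (2 * Real.pi * Int.fract u) = Real.cos (2 * Real.pi * u) := by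
    rw [Int.fract]
    have : 2 * Real.pi * (u - ↑⌊u⌋) = 2 * Real.pi * u - ↑⌊u⌋ * (2 * Real.pi) := by ring
    rw [this, Real.cos_sub_int_mul_two_pi]
  unfold psi
  rw [hcos]
  by_cases h : 1 - Real.cos (2 * Real.pi * u) = 0
  · simp [h]
  · have hpos : 0 < 1 - Real.cos (2 * Real.pi * u) := by
      have := Real.cos_le_one (2 * Real.pi * u)
      rcases lt_or_eq_of_le (sub_nonneg.mpr this) with h' | h'
      · exact h'
      · exact absurd h'.symm h
    rw [if_neg h, Real.exp_log hpos]

lemma exp_psiSum (n : ℕ) (y : ℝ) :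
    Real.exp (psiSum n y) = ∏ ℓ ∈ Finset.range n, (if aa ℓ y = 0 then 1 else aa ℓ y) := by
  unfold psiSum
  rw [Real.exp_sum]
  refine Finset.prod_congr rfl fun ℓ _ => ?_
  rw [exp_psi_fract]
  rfl

lemma exp_psiSum_of_ne {n : ℕ} {y : ℝ} (h : ∀ ℓ < n, aa ℓ y ≠ 0) :
    Real.exp (psiSum n y) = ∏ ℓ ∈ Finset.range n, aa ℓ y := by
  rw [exp_psiSum]
  exact Finset.prod_congr rfl fun ℓ hℓ => if_neg (h ℓ (Finset.mem_range.mp hℓ))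

lemma aa_shift {ℓ m' : ℕ} (hℓ : 1 ≤ ℓ) (k : ℕ) :
    aa ℓ (((2:ℝ) ^ m' + k) / 2 ^ (m' + 1)) = aa ℓ ((k : ℝ) / 2 ^ (m' + 1)) := by
  obtain ⟨j, rfl⟩ := Nat.exists_eq_add_of_le hℓ
  unfold aa
  have harg : 2 * Real.pi * ((2:ℝ) ^ (1 + j) * (((2:ℝ) ^ m' + k) / 2 ^ (m' + 1)))
      = 2 * Real.pi * ((2:ℝ) ^ (1 + j) * ((k:ℝ) / 2 ^ (m' + 1))) + ((2:ℤ) ^ j : ℤ) * (2 * Real.pi) := by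
    push_cast
    have h2 : ((2:ℝ) ^ (m' + 1)) ≠ 0 := by positivity
    field_simp
    ring
  rw [harg, Real.cos_add_int_mul_two_pi]

lemma aa_zero_shift (m' : ℕ) (k : ℕ) :
    aa 0 (((2:ℝ) ^ m' + k) / 2 ^ (m' + 1)) = 2 - aa 0 ((k : ℝ) / 2 ^ (m' + 1)) := by
  unfold aa
  have harg : 2 * Real.pi * ((2:ℝ) ^ 0 * (((2:ℝ) ^ m' + k) / 2 ^ (m' + 1)))
      = 2 * Real.pi * ((2:ℝ) ^ 0 * ((k:ℝ) / 2 ^ (m' + 1))) + Real.pi := by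
    have h2 : ((2:ℝ) ^ (m' + 1)) ≠ 0 := by positivity
    rw [pow_succ]
    field_simp
    ring
  rw [harg, Real.cos_add_pi]
  ring

lemma aa_down (ℓ m' : ℕ) (k : ℕ) :
    aa (ℓ + 1) ((k : ℝ) / 2 ^ (m' + 1)) = aa ℓ ((k : ℝ) / 2 ^ m') := by
  unfold aa
  congr 2
  have h2 : ((2:ℝ) ^ m') ≠ 0 := by positivity
  rw [pow_succ, pow_succ]
  field_simp

lemma ident : ∀ (n m : ℕ), n ≤ m → ∀ w : ℕ → ℝ,
    ∑ k ∈ Finset.range (2 ^ m), ∏ ℓ ∈ Finset.range n, (w ℓ + aa ℓ ((k : ℝ) / 2 ^ m))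
      = 2 ^ m * ∏ ℓ ∈ Finset.range n, (w ℓ + 1) := by
  intro n
  induction n with
  | zero => intro m _ w; simp
  | succ n ih =>
    intro m hm w
    obtain ⟨m', rfl⟩ : ∃ m', m = m' + 1 := ⟨m - 1, by omega⟩
    have hsplit : (2:ℕ) ^ (m' + 1) = 2 ^ m' + 2 ^ m' := by ring
    rw [hsplit, Finset.sum_range_add]
    have hpair : ∀ k ∈ Finset.range (2 ^ m'),
        (∏ ℓ ∈ Finset.range (n+1), (w ℓ + aa ℓ ((k : ℝ) / 2 ^ (m' + 1))))
        + (∏ ℓ ∈ Finset.range (n+1), (w ℓ + aa ℓ (((2 ^ m' + k : ℕ) : ℝ) / 2 ^ (m' + 1))))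
        = 2 * (w 0 + 1) * ∏ ℓ ∈ Finset.range n, ((w ∘ Nat.succ) ℓ + aa ℓ ((k : ℝ) / 2 ^ m')) := by
      intro k _
      rw [Finset.prod_range_succ', Finset.prod_range_succ']
      have e1 : ∀ ℓ ∈ Finset.range n,
          (w (ℓ + 1) + aa (ℓ + 1) (((2 ^ m' + k : ℕ) : ℝ) / 2 ^ (m' + 1)))
          = (w ∘ Nat.succ) ℓ + aa ℓ ((k : ℝ) / 2 ^ m') := by
        intro ℓ _
        have : (((2 ^ m' + k : ℕ) : ℝ)) = (2:ℝ) ^ m' + k := by push_cast; ring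
        rw [this, aa_shift (by omega), aa_down]
        rfl
      have e2 : ∀ ℓ ∈ Finset.range n,
          (w (ℓ + 1) + aa (ℓ + 1) ((k : ℝ) / 2 ^ (m' + 1)))
          = (w ∘ Nat.succ) ℓ + aa ℓ ((k : ℝ) / 2 ^ m') := by
        intro ℓ _; rw [aa_down]; rfl
      rw [Finset.prod_congr rfl e1, Finset.prod_congr rfl e2]
      have e3 : aa 0 (((2 ^ m' + k : ℕ) : ℝ) / 2 ^ (m' + 1)) = 2 - aa 0 ((k : ℝ) / 2 ^ (m' + 1)) := by
        have : (((2 ^ m' + k : ℕ) : ℝ)) = (2:ℝ) ^ m' + k := by push_cast; ring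
        rw [this, aa_zero_shift]
      rw [e3]
      ring
    rw [← Finset.sum_add_distrib, Finset.sum_congr rfl hpair, ← Finset.mul_sum,
      ih m' (by omega) (w ∘ Nat.succ)]
    rw [Finset.prod_range_succ' (fun ℓ => w ℓ + 1)]
    have : ∏ ℓ ∈ Finset.range n, ((w ∘ Nat.succ) ℓ + 1) = ∏ ℓ ∈ Finset.range n, (w (ℓ + 1) + 1) := rfl
    rw [this]
    push_cast
    ring
lemma sum_split_even_odd (N : ℕ) (f : ℕ → ℝ) :
    ∑ k ∈ Finset.range (2 * N), f k
      = ∑ i ∈ Finset.range N, f (2 * i) + ∑ i ∈ Finset.range N, f (2 * i + 1) := by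
  induction N with
  | zero => simp
  | succ N ih =>
    have : 2 * (N + 1) = 2 * N + 1 + 1 := by ring
    rw [this, Finset.sum_range_succ, Finset.sum_range_succ,
      Finset.sum_range_succ (fun i => f (2 * i)), Finset.sum_range_succ (fun i => f (2 * i + 1)), ih]
    ring

lemma sum_split_even_odd' (N : ℕ) (f : ℕ → ℝ) :
    ∑ k ∈ Finset.range (2 * N + 1), f k
      = ∑ i ∈ Finset.range (N + 1), f (2 * i) + ∑ i ∈ Finset.range N, f (2 * i + 1) := by
  rw [Finset.sum_range_succ, sum_split_even_odd, Finset.sum_range_succ (fun i => f (2 * i))]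
  ring

/-- odd points of level m+1 are non-degenerate for levels < m+1 -/
lemma aa_odd_ne {m : ℕ} (i : ℕ) : ∀ ℓ < m + 1, aa ℓ (((2 * i + 1 : ℕ) : ℝ) / 2 ^ (m + 1)) ≠ 0 := by
  intro ℓ hℓ h
  rw [aa_eq_zero_iff] at h
  obtain ⟨q, hq⟩ := h
  have h2 : ((2:ℝ) ^ (m + 1)) ≠ 0 := by positivity
  have key : ((2 * i + 1 : ℕ) : ℝ) * 2 ^ ℓ = (q : ℝ) * 2 ^ (m + 1) := by
    field_simp at hq
    push_cast at hq ⊢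
    linear_combination hq
  have keyZ : ((2 * i + 1 : ℤ)) * 2 ^ ℓ = q * 2 ^ (m + 1) := by
    exact_mod_cast key
  obtain ⟨r, hr, hrpos⟩ : ∃ r, m + 1 = r + ℓ ∧ 0 < r := ⟨m + 1 - ℓ, by omega, by omega⟩
  have h1 : ((2 * i + 1 : ℤ)) * 2 ^ ℓ = (q * 2 ^ r) * 2 ^ ℓ := by
    rw [keyZ, hr, pow_add]; ring
  have hp : ((2:ℤ) ^ ℓ) ≠ 0 := by positivity
  have h2 : (2 * i + 1 : ℤ) = q * 2 ^ r := mul_right_cancel₀ hp h1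
  have hdvd : (2:ℤ) ∣ (2 * i + 1 : ℤ) := by
    rw [h2]
    exact Dvd.dvd.mul_left (dvd_pow_self 2 (by omega)) _
  omega

/-- the odd-point lower bound identity -/
lemma odd_sum (n : ℕ) :
    ∑ k ∈ Finset.range (2 ^ n), ∏ ℓ ∈ Finset.range n, aa ℓ (((2 * k + 1 : ℕ) : ℝ) / 2 ^ (n + 1))
      = 2 ^ n := by
  have h1 := ident n (n + 1) (by omega) (fun _ => 0)
  have h2 := ident n n (le_refl n) (fun _ => 0)
  simp only [zero_add] at h1 h2
  have hsplit : (2:ℕ) ^ (n + 1) = 2 * 2 ^ n := by ring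
  rw [hsplit, sum_split_even_odd] at h1
  have heven : ∀ i ∈ Finset.range (2 ^ n),
      ∏ ℓ ∈ Finset.range n, aa ℓ (((2 * i : ℕ) : ℝ) / 2 ^ (n + 1))
        = ∏ ℓ ∈ Finset.range n, aa ℓ ((i : ℝ) / 2 ^ n) := by
    intro i _
    refine Finset.prod_congr rfl fun ℓ _ => ?_
    congr 1
    have h2 : ((2:ℝ) ^ n) ≠ 0 := by positivity
    push_cast
    rw [pow_succ]
    field_simp
  rw [Finset.sum_congr rfl heven, h2] at h1
  simp only [Finset.prod_const_one, mul_one] at h1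
  have : (2:ℝ) ^ (n + 1) = 2 ^ n + 2 ^ n := by ring
  linarith [h1]
noncomputable def Eval (n j : ℕ) : ℝ := Real.exp (psiSum n ((j : ℝ) / 2 ^ n))

noncomputable def EE (n : ℕ) : ℝ := ∑ j ∈ Finset.range (2 ^ n + 1), Eval n j

lemma Eval_nonneg (n j : ℕ) : 0 ≤ Eval n j := (Real.exp_pos _).le

lemma Eval_even (n i : ℕ) : Eval (n + 1) (2 * i) = Eval n i := by
  unfold Eval
  have hy : ((2 * i : ℕ) : ℝ) / 2 ^ (n + 1) = (i : ℝ) / 2 ^ n := by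
    have h2 : ((2:ℝ) ^ n) ≠ 0 := by positivity
    push_cast
    rw [pow_succ]
    field_simp
  rw [hy, exp_psiSum, exp_psiSum, Finset.prod_range_succ]
  have hz : aa n ((i : ℝ) / 2 ^ n) = 0 := by
    rw [aa_eq_zero_iff]
    exact ⟨i, by field_simp; norm_cast⟩
  rw [if_pos hz, mul_one]

lemma odd_le_full (n : ℕ) :
    ∑ i ∈ Finset.range (2 ^ n), ∏ ℓ ∈ Finset.range (n + 1), aa ℓ (((2 * i + 1 : ℕ) : ℝ) / 2 ^ (n + 1))
      ≤ 2 ^ (n + 1) := by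
  have h := ident (n + 1) (n + 1) le_rfl (fun _ => 0)
  simp only [zero_add, Finset.prod_const_one, mul_one] at h
  have hsplit : (2:ℕ) ^ (n + 1) = 2 * 2 ^ n := by ring
  rw [hsplit, sum_split_even_odd] at h
  have heven_nonneg : 0 ≤ ∑ i ∈ Finset.range (2 ^ n),
      ∏ ℓ ∈ Finset.range (n + 1), aa ℓ (((2 * i : ℕ) : ℝ) / 2 ^ (n + 1)) :=
    Finset.sum_nonneg fun i _ => Finset.prod_nonneg fun ℓ _ => aa_nonneg _ _
  linarith [h, heven_nonneg]

lemma EE_le (n : ℕ) : EE n ≤ 2 ^ (n + 1) := by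
  induction n with
  | zero =>
    unfold EE Eval psiSum
    norm_num [Finset.sum_range_succ]
  | succ n ih =>
    unfold EE
    have hN : (2:ℕ) ^ (n + 1) + 1 = 2 * 2 ^ n + 1 := by ring
    rw [hN, sum_split_even_odd']
    have he : ∑ i ∈ Finset.range (2 ^ n + 1), Eval (n + 1) (2 * i) = EE n := by
      unfold EE
      exact Finset.sum_congr rfl fun i _ => Eval_even n i
    have ho : ∑ i ∈ Finset.range (2 ^ n), Eval (n + 1) (2 * i + 1)
        = ∑ i ∈ Finset.range (2 ^ n),
            ∏ ℓ ∈ Finset.range (n + 1), aa ℓ (((2 * i + 1 : ℕ) : ℝ) / 2 ^ (n + 1)) := by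
      refine Finset.sum_congr rfl fun i _ => ?_
      unfold Eval
      exact exp_psiSum_of_ne (aa_odd_ne i)
    rw [he, ho]
    have := odd_le_full n
    have h2 : (2:ℝ) ^ (n + 1 + 1) = 2 ^ (n + 1) + 2 ^ (n + 1) := by ring
    linarith
lemma abs_sin_sub (s t : ℝ) : |Real.sin s - Real.sin t| ≤ |s - t| := by
  rw [Real.sin_sub_sin]
  have h1 : |Real.sin ((s - t) / 2)| ≤ |(s - t) / 2| := Real.abs_sin_le_abs
  have h2 : |Real.cos ((s + t) / 2)| ≤ 1 := Real.abs_cos_le_one _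
  rw [abs_mul, abs_mul, abs_two]
  calc 2 * |Real.sin ((s - t) / 2)| * |Real.cos ((s + t) / 2)|
      ≤ 2 * |(s - t) / 2| * 1 := by
        apply mul_le_mul (by nlinarith [abs_nonneg (Real.sin ((s-t)/2))]) h2
          (abs_nonneg _) (by positivity)
    _ = |s - t| := by rw [abs_div, abs_two]; ring

lemma aa_eq_sin (ℓ : ℕ) (x : ℝ) : aa ℓ x = 2 * Real.sin (Real.pi * ((2:ℝ) ^ ℓ * x)) ^ 2 := by
  unfold aa
  have h2 : 2 * Real.pi * ((2:ℝ) ^ ℓ * x) = 2 * (Real.pi * ((2:ℝ) ^ ℓ * x)) := by ring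
  rw [h2, Real.cos_two_mul']
  have h := Real.sin_sq_add_cos_sq (Real.pi * ((2:ℝ) ^ ℓ * x))
  linarith

noncomputable def eps (n ℓ : ℕ) : ℝ := (2:ℝ) ^ ℓ / 2 ^ n
noncomputable def ww (n ℓ : ℕ) : ℝ :=
  2 * Real.pi ^ 2 * ((4:ℝ) ^ ℓ / 4 ^ n) + 2 * Real.pi ^ 2 * ((2:ℝ) ^ ℓ / 2 ^ n)

lemma eps_pos (n ℓ : ℕ) : 0 < eps n ℓ := by unfold eps; positivity
lemma ww_nonneg (n ℓ : ℕ) : 0 ≤ ww n ℓ := by unfold ww; positivity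

lemma factor_bound (n ℓ k : ℕ) {y : ℝ}
    (hy : y ∈ Set.Icc ((k:ℝ) / 2 ^ n) ((k + 1 : ℝ) / 2 ^ n)) :
    aa ℓ y ≤ (1 + eps n ℓ) * (ww n ℓ + aa ℓ ((k:ℝ) / 2 ^ n)) := by
  obtain ⟨hy1, hy2⟩ := hy
  set s := Real.pi * ((2:ℝ) ^ ℓ * y) with hs
  set t := Real.pi * ((2:ℝ) ^ ℓ * ((k:ℝ) / 2 ^ n)) with ht
  set d := Real.pi * (2:ℝ) ^ ℓ / 2 ^ n with hd
  have hdpos : 0 < d := by rw [hd]; positivity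
  have hst : |s - t| ≤ d := by
    have h1 : s - t = Real.pi * (2:ℝ) ^ ℓ * (y - (k:ℝ) / 2 ^ n) := by rw [hs, ht]; ring
    have h2 : 0 ≤ y - (k:ℝ) / 2 ^ n := by linarith
    have h3 : y - (k:ℝ) / 2 ^ n ≤ 1 / 2 ^ n := by
      have : ((k:ℝ) + 1) / 2 ^ n = (k:ℝ) / 2 ^ n + 1 / 2 ^ n := by ring
      linarith [hy2, this.symm.le]
    rw [h1, abs_of_nonneg (by positivity)]
    rw [hd]
    have hπ : (0:ℝ) < Real.pi * 2 ^ ℓ := by positivity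
    calc Real.pi * 2 ^ ℓ * (y - (k:ℝ) / 2 ^ n) ≤ Real.pi * 2 ^ ℓ * (1 / 2 ^ n) :=
          mul_le_mul_of_nonneg_left h3 hπ.le
      _ = Real.pi * 2 ^ ℓ / 2 ^ n := by ring
  have hsin : |Real.sin s| ≤ |Real.sin t| + d := by
    have := abs_sin_sub s t
    have habs : |Real.sin s| - |Real.sin t| ≤ |Real.sin s - Real.sin t| := by
      exact abs_sub_abs_le_abs_sub _ _
    linarith
  rw [aa_eq_sin, aa_eq_sin, ← hs, ← ht]
  set T := |Real.sin t| with hT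
  have hTnn : 0 ≤ T := abs_nonneg _
  have hsin2 : Real.sin s ^ 2 ≤ (T + d) ^ 2 := by
    have h1 : Real.sin s ^ 2 = |Real.sin s| ^ 2 := (sq_abs _).symm
    rw [h1]
    exact pow_le_pow_left₀ (abs_nonneg _) hsin 2
  have hT2 : Real.sin t ^ 2 = T ^ 2 := (sq_abs _).symm
  rw [hT2]
  set ε := eps n ℓ with hε
  have hεpos : 0 < ε := eps_pos n ℓ
  have hww : ww n ℓ = 2 * d ^ 2 + 2 * d ^ 2 / ε := by
    rw [hd, hε]
    unfold ww eps
    have h4ℓ : (4:ℝ) ^ ℓ = ((2:ℝ) ^ ℓ) ^ 2 := by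
      rw [← pow_mul, show (4:ℝ) = 2 ^ 2 by norm_num, ← pow_mul, Nat.mul_comm]
    have h4n : (4:ℝ) ^ n = ((2:ℝ) ^ n) ^ 2 := by
      rw [← pow_mul, show (4:ℝ) = 2 ^ 2 by norm_num, ← pow_mul, Nat.mul_comm]
    rw [h4ℓ, h4n]
    have h1 : ((2:ℝ) ^ n) ≠ 0 := by positivity
    have h2 : ((2:ℝ) ^ ℓ) ≠ 0 := by positivity
    field_simp
  rw [hww]
  have key : 0 ≤ (ε * T - d) ^ 2 := sq_nonneg _
  have hgoal : ε * (2 * (T + d) ^ 2) ≤ ε * ((1 + ε) * (2 * d ^ 2 + 2 * d ^ 2 / ε + 2 * T ^ 2)) := by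
    have hdiv : ε * (2 * d ^ 2 / ε) = 2 * d ^ 2 := by field_simp
    nlinarith [key, sq_nonneg d, sq_nonneg T, mul_nonneg hεpos.le (sq_nonneg d),
      mul_nonneg (mul_nonneg hεpos.le hεpos.le) (sq_nonneg d)]
  have := (mul_le_mul_iff_right₀ hεpos).mp hgoal
  nlinarith [hsin2, this]
noncomputable def PP (n k : ℕ) : ℝ :=
  ∏ ℓ ∈ Finset.range n, ((1 + eps n ℓ) * (ww n ℓ + aa ℓ ((k:ℝ) / 2 ^ n)))

lemma PP_nonneg (n k : ℕ) : 0 ≤ PP n k :=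
  Finset.prod_nonneg fun ℓ _ => mul_nonneg (by linarith [eps_pos n ℓ])
    (add_nonneg (ww_nonneg n ℓ) (aa_nonneg _ _))

lemma interval_bound (n k : ℕ) {y : ℝ}
    (hy : y ∈ Set.Icc ((k:ℝ) / 2 ^ n) ((k + 1 : ℝ) / 2 ^ n)) :
    Real.exp (psiSum n y) ≤ PP n k + Eval n k + Eval n (k + 1) := by
  by_cases hall : ∀ ℓ < n, aa ℓ y ≠ 0
  · rw [exp_psiSum_of_ne hall]
    have h1 : ∏ ℓ ∈ Finset.range n, aa ℓ y ≤ PP n k := by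
      refine Finset.prod_le_prod (fun ℓ _ => aa_nonneg _ _) fun ℓ _ => factor_bound n ℓ k hy
    linarith [h1, Eval_nonneg n k, Eval_nonneg n (k + 1)]
  · push_neg at hall
    obtain ⟨ℓ, hℓ, h0⟩ := hall
    rw [aa_eq_zero_iff] at h0
    obtain ⟨q, hq⟩ := h0
    have hpow : (2:ℝ) ^ n = 2 ^ ℓ * 2 ^ (n - ℓ) := by
      rw [← pow_add]; congr 1; omega
    set z : ℤ := q * 2 ^ (n - ℓ) with hz
    have hyz : y * 2 ^ n = (z : ℝ) := by
      rw [hpow, hz]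
      push_cast
      rw [← hq]
      ring
    have h2n : (0:ℝ) < 2 ^ n := by positivity
    obtain ⟨hy1, hy2⟩ := hy
    have hb1 : (k : ℝ) ≤ (z : ℝ) := by
      rw [← hyz]
      rw [div_le_iff₀ h2n] at hy1
      linarith
    have hb2 : (z : ℝ) ≤ (k : ℝ) + 1 := by
      rw [← hyz]
      rw [le_div_iff₀ h2n] at hy2
      linarith
    have hzk : z = (k : ℤ) ∨ z = (k : ℤ) + 1 := by
      have h1 : (k : ℤ) ≤ z := by exact_mod_cast hb1
      have h2 : z ≤ (k : ℤ) + 1 := by exact_mod_cast hb2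
      omega
    have hyeq : y = (z : ℝ) / 2 ^ n := by
      field_simp [← hyz]; exact hyz
    rcases hzk with h | h
    · have : y = (k : ℝ) / 2 ^ n := by rw [hyeq, h]; norm_num
      have heq : Real.exp (psiSum n y) = Eval n k := by rw [this]; rfl
      rw [heq]
      linarith [PP_nonneg n k, Eval_nonneg n (k + 1)]
    · have : y = ((k : ℝ) + 1) / 2 ^ n := by rw [hyeq, h]; push_cast; ring
      have heq : Real.exp (psiSum n y) = Eval n (k + 1) := by
        rw [this]; unfold Eval; push_cast; rfl
      rw [heq]
      linarith [PP_nonneg n k, Eval_nonneg n k]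

lemma prod_one_add_le_exp {n : ℕ} (f : ℕ → ℝ) (hf : ∀ ℓ, 0 ≤ f ℓ) :
    ∏ ℓ ∈ Finset.range n, (1 + f ℓ) ≤ Real.exp (∑ ℓ ∈ Finset.range n, f ℓ) := by
  rw [Real.exp_sum]
  exact Finset.prod_le_prod (fun ℓ _ => by linarith [hf ℓ])
    (fun ℓ _ => by linarith [Real.add_one_le_exp (f ℓ)])

lemma sum_eps_le (n : ℕ) : ∑ ℓ ∈ Finset.range n, eps n ℓ ≤ 1 := by
  unfold eps
  rw [← Finset.sum_div]
  have hg : ∑ ℓ ∈ Finset.range n, (2:ℝ) ^ ℓ = 2 ^ n - 1 := by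
    induction n with
    | zero => simp
    | succ n ih => rw [Finset.sum_range_succ, ih]; ring
  rw [hg, div_le_one (by positivity)]
  linarith

lemma sum_pow4_le (n : ℕ) : ∑ ℓ ∈ Finset.range n, (4:ℝ) ^ ℓ ≤ 4 ^ n := by
  induction n with
  | zero => simp
  | succ n ih =>
    rw [Finset.sum_range_succ]
    have h : (4:ℝ) ^ (n + 1) = 4 * 4 ^ n := by ring
    nlinarith [pow_pos (show (0:ℝ) < 4 by norm_num) n]

lemma sum_ww_le (n : ℕ) : ∑ ℓ ∈ Finset.range n, ww n ℓ ≤ 4 * Real.pi ^ 2 := by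
  unfold ww
  rw [Finset.sum_add_distrib, ← Finset.mul_sum, ← Finset.mul_sum]
  have hg2 : ∑ ℓ ∈ Finset.range n, ((2:ℝ) ^ ℓ / 2 ^ n) ≤ 1 := sum_eps_le n
  have hg4 : ∑ ℓ ∈ Finset.range n, ((4:ℝ) ^ ℓ / 4 ^ n) ≤ 1 := by
    rw [← Finset.sum_div]
    rw [div_le_one (by positivity)]
    exact sum_pow4_le n
  have hπ : (0:ℝ) < Real.pi ^ 2 := by positivity
  nlinarith

lemma sum_PP_le (n : ℕ) : ∑ k ∈ Finset.range (2 ^ n), PP n k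
    ≤ Real.exp (1 + 4 * Real.pi ^ 2) * 2 ^ n := by
  have hdist : ∀ k, PP n k = (∏ ℓ ∈ Finset.range n, (1 + eps n ℓ))
      * ∏ ℓ ∈ Finset.range n, (ww n ℓ + aa ℓ ((k:ℝ) / 2 ^ n)) := by
    intro k; unfold PP; rw [Finset.prod_mul_distrib]
  have hsum : ∑ k ∈ Finset.range (2 ^ n), ∏ ℓ ∈ Finset.range n, (ww n ℓ + aa ℓ ((k:ℝ) / 2 ^ n))
      = 2 ^ n * ∏ ℓ ∈ Finset.range n, (ww n ℓ + 1) := ident n n le_rfl (fun ℓ => ww n ℓ)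
  simp only [hdist]
  rw [← Finset.mul_sum, hsum]
  have h1 : ∏ ℓ ∈ Finset.range n, (1 + eps n ℓ) ≤ Real.exp 1 := by
    calc ∏ ℓ ∈ Finset.range n, (1 + eps n ℓ) ≤ Real.exp (∑ ℓ ∈ Finset.range n, eps n ℓ) :=
          prod_one_add_le_exp _ (fun ℓ => (eps_pos n ℓ).le)
      _ ≤ Real.exp 1 := Real.exp_le_exp.mpr (sum_eps_le n)
  have h2 : ∏ ℓ ∈ Finset.range n, (ww n ℓ + 1) ≤ Real.exp (4 * Real.pi ^ 2) := by
    have : ∀ ℓ ∈ Finset.range n, ww n ℓ + 1 = 1 + ww n ℓ := fun ℓ _ => by ring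
    rw [Finset.prod_congr rfl this]
    calc ∏ ℓ ∈ Finset.range n, (1 + ww n ℓ) ≤ Real.exp (∑ ℓ ∈ Finset.range n, ww n ℓ) :=
          prod_one_add_le_exp _ (fun ℓ => ww_nonneg n ℓ)
      _ ≤ Real.exp (4 * Real.pi ^ 2) := Real.exp_le_exp.mpr (sum_ww_le n)
  have hp1 : (0:ℝ) ≤ ∏ ℓ ∈ Finset.range n, (1 + eps n ℓ) :=
    Finset.prod_nonneg fun ℓ _ => by linarith [(eps_pos n ℓ).le]
  have hp2 : (0:ℝ) ≤ ∏ ℓ ∈ Finset.range n, (ww n ℓ + 1) :=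
    Finset.prod_nonneg fun ℓ _ => by linarith [ww_nonneg n ℓ]
  have h2n : (0:ℝ) < 2 ^ n := by positivity
  calc (∏ ℓ ∈ Finset.range n, (1 + eps n ℓ)) * (2 ^ n * ∏ ℓ ∈ Finset.range n, (ww n ℓ + 1))
      ≤ Real.exp 1 * (2 ^ n * Real.exp (4 * Real.pi ^ 2)) := by
        apply mul_le_mul h1 _ (by positivity) (Real.exp_pos 1).le
        exact mul_le_mul_of_nonneg_left h2 h2n.le
    _ = Real.exp (1 + 4 * Real.pi ^ 2) * 2 ^ n := by rw [Real.exp_add]; ring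

lemma sum_Eval_le (n : ℕ) : ∑ k ∈ Finset.range (2 ^ n), Eval n k ≤ 2 ^ (n + 1) := by
  have h : ∑ k ∈ Finset.range (2 ^ n), Eval n k ≤ EE n := by
    unfold EE
    exact Finset.sum_le_sum_of_subset_of_nonneg
      (Finset.range_subset_range.mpr (by omega)) (fun j _ _ => Eval_nonneg n j)
  linarith [EE_le n]

lemma sum_Eval_le' (n : ℕ) : ∑ k ∈ Finset.range (2 ^ n), Eval n (k + 1) ≤ 2 ^ (n + 1) := by
  have h : EE n = ∑ k ∈ Finset.range (2 ^ n), Eval n (k + 1) + Eval n 0 := by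
    unfold EE
    exact Finset.sum_range_succ' (Eval n) (2 ^ n)
  have := EE_le n
  have := Eval_nonneg n 0
  linarith
/-- `A n = ∑_{ω ∈ Σ^n} sup_{x ∈ ⟨ω⟩} exp(ψ_n(x))`. -/
noncomputable def A (n : ℕ) : ENNReal :=
  ∑ k ∈ Finset.range (2^n),
    ⨆ y ∈ Set.Icc ((k:ℝ) / 2^n) ((k+1 : ℝ) / 2^n), ENNReal.ofReal (Real.exp (psiSum n y))
lemma A_le (n : ℕ) : A n ≤ ENNReal.ofReal ((Real.exp (1 + 4 * Real.pi ^ 2) + 4) * 2 ^ n) := by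
  unfold A
  have hstep : ∀ k ∈ Finset.range (2 ^ n),
      (⨆ y ∈ Set.Icc ((k:ℝ) / 2 ^ n) ((k + 1 : ℝ) / 2 ^ n),
        ENNReal.ofReal (Real.exp (psiSum n y)))
      ≤ ENNReal.ofReal (PP n k + Eval n k + Eval n (k + 1)) := by
    intro k _
    refine iSup₂_le fun y hy => ?_
    exact ENNReal.ofReal_le_ofReal (interval_bound n k hy)
  calc ∑ k ∈ Finset.range (2 ^ n), ⨆ y ∈ Set.Icc ((k:ℝ) / 2 ^ n) ((k + 1 : ℝ) / 2 ^ n),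
        ENNReal.ofReal (Real.exp (psiSum n y))
      ≤ ∑ k ∈ Finset.range (2 ^ n), ENNReal.ofReal (PP n k + Eval n k + Eval n (k + 1)) :=
        Finset.sum_le_sum hstep
    _ = ENNReal.ofReal (∑ k ∈ Finset.range (2 ^ n), (PP n k + Eval n k + Eval n (k + 1))) := by
        rw [ENNReal.ofReal_sum_of_nonneg]
        intro k _
        have := PP_nonneg n k
        have := Eval_nonneg n k
        have := Eval_nonneg n (k + 1)
        linarith
    _ ≤ ENNReal.ofReal ((Real.exp (1 + 4 * Real.pi ^ 2) + 4) * 2 ^ n) := by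
        apply ENNReal.ofReal_le_ofReal
        have h1 := sum_PP_le n
        have h2 := sum_Eval_le n
        have h3 := sum_Eval_le' n
        have hsplit : ∑ k ∈ Finset.range (2 ^ n), (PP n k + Eval n k + Eval n (k + 1))
            = ∑ k ∈ Finset.range (2 ^ n), PP n k + ∑ k ∈ Finset.range (2 ^ n), Eval n k
              + ∑ k ∈ Finset.range (2 ^ n), Eval n (k + 1) := by
          rw [Finset.sum_add_distrib, Finset.sum_add_distrib]
        have hpow : (2:ℝ) ^ (n + 1) = 2 * 2 ^ n := by ring
        rw [hsplit]
        nlinarith [pow_pos (show (0:ℝ) < 2 by norm_num) n]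

lemma A_ge (n : ℕ) : ENNReal.ofReal ((2:ℝ) ^ n) ≤ A n := by
  unfold A
  have hmem : ∀ k ∈ Finset.range (2 ^ n),
      ((2 * k + 1 : ℕ) : ℝ) / 2 ^ (n + 1) ∈ Set.Icc ((k:ℝ) / 2 ^ n) ((k + 1 : ℝ) / 2 ^ n) := by
    intro k _
    have h2n : (0:ℝ) < 2 ^ n := by positivity
    have h2n1 : (0:ℝ) < 2 ^ (n + 1) := by positivity
    constructor
    · rw [div_le_div_iff₀ h2n h2n1]
      push_cast
      rw [pow_succ]
      nlinarith
    · rw [div_le_div_iff₀ h2n1 h2n]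
      push_cast
      rw [pow_succ]
      nlinarith
  have hle : ∀ k ∈ Finset.range (2 ^ n),
      ENNReal.ofReal (Real.exp (psiSum n (((2 * k + 1 : ℕ) : ℝ) / 2 ^ (n + 1))))
      ≤ ⨆ y ∈ Set.Icc ((k:ℝ) / 2 ^ n) ((k + 1 : ℝ) / 2 ^ n),
          ENNReal.ofReal (Real.exp (psiSum n y)) := by
    intro k hk
    exact le_iSup₂ (f := fun y (_ : y ∈ Set.Icc ((k:ℝ) / 2 ^ n) ((k + 1 : ℝ) / 2 ^ n)) =>
      ENNReal.ofReal (Real.exp (psiSum n y))) _ (hmem k hk)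
  calc ENNReal.ofReal ((2:ℝ) ^ n)
      = ∑ k ∈ Finset.range (2 ^ n),
          ENNReal.ofReal (Real.exp (psiSum n (((2 * k + 1 : ℕ) : ℝ) / 2 ^ (n + 1)))) := by
        rw [← ENNReal.ofReal_sum_of_nonneg (fun k _ => (Real.exp_pos _).le)]
        congr 1
        have : ∀ k ∈ Finset.range (2 ^ n),
            Real.exp (psiSum n (((2 * k + 1 : ℕ) : ℝ) / 2 ^ (n + 1)))
            = ∏ ℓ ∈ Finset.range n, aa ℓ (((2 * k + 1 : ℕ) : ℝ) / 2 ^ (n + 1)) := by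
          intro k _
          exact exp_psiSum_of_ne (fun ℓ hℓ => aa_odd_ne k ℓ (by omega))
        rw [Finset.sum_congr rfl this, odd_sum]
    _ ≤ _ := Finset.sum_le_sum hle
/-- The pressure at `t = 1` equals `log 2`. -/
theorem pressure_at_one :
    Filter.Tendsto (fun n : ℕ => ENNReal.log (A n) / (n : EReal)) Filter.atTop
      (nhds ((Real.log 2 : ℝ) : EReal)) := by
  set C : ℝ := Real.exp (1 + 4 * Real.pi ^ 2) + 4 with hC
  have hC1 : 1 ≤ C := by
    have := Real.exp_pos (1 + 4 * Real.pi ^ 2)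
    rw [hC]; linarith
  have hCpos : 0 < C := by linarith
  set B : ℕ → ℝ := fun n => (A n).toReal with hB
  have h2n : ∀ n : ℕ, (0:ℝ) < 2 ^ n := fun n => by positivity
  have hAtop : ∀ n, A n ≠ ⊤ := fun n =>
    ((A_le n).trans_lt ENNReal.ofReal_lt_top).ne
  have hBge : ∀ n, (2:ℝ) ^ n ≤ B n := by
    intro n
    have h := ENNReal.toReal_mono (hAtop n) (A_ge n)
    rwa [ENNReal.toReal_ofReal (h2n n).le] at h
  have hBle : ∀ n, B n ≤ C * 2 ^ n := by
    intro n
    have h := ENNReal.toReal_mono (by exact ENNReal.ofReal_ne_top) (A_le n)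
    rwa [ENNReal.toReal_ofReal (by positivity)] at h
  have hBpos : ∀ n, 0 < B n := fun n => lt_of_lt_of_le (h2n n) (hBge n)
  have hlog : ∀ n : ℕ, ENNReal.log (A n) / (n : EReal) = ((Real.log (B n) / n : ℝ) : EReal) := by
    intro n
    have h1 : A n = ENNReal.ofReal (B n) := (ENNReal.ofReal_toReal (hAtop n)).symm
    rw [h1, ENNReal.log_ofReal_of_pos (hBpos n), EReal.coe_div, EReal.coe_coe_eq_natCast]
  simp only [hlog]
  rw [EReal.tendsto_coe]
  have hlow : ∀ᶠ n : ℕ in Filter.atTop, Real.log 2 ≤ Real.log (B n) / n := by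
    filter_upwards [Filter.eventually_ge_atTop 1] with n hn
    have hnpos : (0:ℝ) < n := by exact_mod_cast hn
    rw [le_div_iff₀ hnpos]
    have h := Real.log_le_log (h2n n) (hBge n)
    rw [Real.log_pow] at h
    calc Real.log 2 * n = n * Real.log 2 := by ring
      _ ≤ Real.log (B n) := h
  have hhigh : ∀ᶠ n : ℕ in Filter.atTop,
      Real.log (B n) / n ≤ Real.log 2 + Real.log C * (1 / n) := by
    filter_upwards [Filter.eventually_ge_atTop 1] with n hn
    have hnpos : (0:ℝ) < n := by exact_mod_cast hn
    rw [div_le_iff₀ hnpos]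
    have h := Real.log_le_log (hBpos n) (hBle n)
    rw [Real.log_mul (ne_of_gt hCpos) (ne_of_gt (h2n n)), Real.log_pow] at h
    have hexp : (Real.log 2 + Real.log C * (1 / n)) * n = n * Real.log 2 + Real.log C := by
      field_simp
    rw [hexp]
    linarith
  have htend : Filter.Tendsto (fun n : ℕ => Real.log 2 + Real.log C * (1 / n))
      Filter.atTop (nhds (Real.log 2)) := by
    have h0 : Filter.Tendsto (fun n : ℕ => (1:ℝ) / n) Filter.atTop (nhds 0) :=
      tendsto_one_div_atTop_nhds_zero_nat
    have := (tendsto_const_nhds (x := Real.log C) (f := Filter.atTop (α := ℕ))).mul h0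
    have h2 := (tendsto_const_nhds (x := Real.log 2) (f := Filter.atTop (α := ℕ))).add this
    simpa using h2
  exact tendsto_of_tendsto_of_tendsto_of_le_of_le' tendsto_const_nhds htend hlow hhigh
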